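/- Let G be a locally compact Hausdorff group with left Haar measure α acting continuously on the left on a locally compact Hausdorff space X, let λ be a positive Radon measure on X, and let Δ : G × X → ℝ_{>0} be a continuous function satisfying the cocycle identity Δ(ζγ, x) = Δ(ζ, γ·x)·Δ(γ, x) and the quasi-invariance condition: for every F ∈ C_c(G × X), ∫_X ∫_G F(γ⁻¹, x) dα(γ) dλ(x) = ∫_X ∫_G F(γ, γ⁻¹·x) Δ(γ, γ⁻¹·x) dα(γ) dλ(x). For φ ∈ C_c(G) and f ∈ C_c(X) define (φ·f)(x) = ∫_G φ(γ) f(γ⁻¹·x) Δ(γ, γ⁻¹·x)^{1/2} dα(γ), and define φ*(γ) = conj(φ(γ⁻¹)). Then for all φ ∈ C_c(G) and f, g ∈ C_c(X), ∫_X conj((φ·f)(x)) · g(x) dλ(x) = ∫_X conj(f(x)) · (φ*·g)(x) dλ(x); that is, the operator f ↦ φ·f on C_c(X) ⊆ L²(X, λ) has formal adjoint g ↦ φ*·g. -/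

import Mathlib

open MeasureTheory

/-- if `λ` is quasi-invariant for the continuous action of the locally
compact Hausdorff group `G` on `X`, with continuous positive cocycle `Δ`, then the
twisted action `(φ·f)(x) = ∫ φ(γ) f(γ⁻¹x) Δ(γ,γ⁻¹x)^{1/2} dα(γ)` on
`C_c(X) ⊆ L²(X,λ)` has formal adjoint `g ↦ φ*·g` with `φ*(γ) = conj(φ(γ⁻¹))`. -/
theorem twisted_action_formal_adjoint
    {G X : Type*}
    [Group G] [TopologicalSpace G] [IsTopologicalGroup G]
    [LocallyCompactSpace G] [T2Space G] [MeasurableSpace G] [BorelSpace G]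
    [TopologicalSpace X] [LocallyCompactSpace X] [T2Space X]
    [MulAction G X] [ContinuousSMul G X]
    [MeasurableSpace X] [BorelSpace X]
    (α : Measure G) [α.IsHaarMeasure]
    (lam : Measure X) [lam.Regular]
    (Δ : G × X → ℝ) (hΔpos : ∀ p, 0 < Δ p) (hΔcont : Continuous Δ)
    (hcocycle : ∀ (ζ γ : G) (x : X), Δ (ζ * γ, x) = Δ (ζ, γ • x) * Δ (γ, x))
    (hquasi : ∀ F : G × X → ℂ, Continuous F → HasCompactSupport F →
      ∫ x, (∫ γ, F (γ⁻¹, x) ∂α) ∂lam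
        = ∫ x, (∫ γ, F (γ, γ⁻¹ • x) * ((Δ (γ, γ⁻¹ • x) : ℝ) : ℂ) ∂α) ∂lam)
    (φ : G → ℂ) (hφ : Continuous φ) (hφc : HasCompactSupport φ)
    (f g : X → ℂ) (hf : Continuous f) (hfc : HasCompactSupport f)
    (hg : Continuous g) (hgc : HasCompactSupport g) :
    ∫ x, (starRingEnd ℂ)
          (∫ γ, φ γ * f (γ⁻¹ • x) * (Real.sqrt (Δ (γ, γ⁻¹ • x)) : ℂ) ∂α)
        * g x ∂lam
      = ∫ x, (starRingEnd ℂ) (f x)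
          * (∫ γ, (starRingEnd ℂ) (φ γ⁻¹) * g (γ⁻¹ • x)
              * (Real.sqrt (Δ (γ, γ⁻¹ • x)) : ℂ) ∂α) ∂lam := by
  -- Step 0: basic consequences of the cocycle identity
  have hΔ1 : ∀ x : X, Δ (1, x) = 1 := by
    intro x
    have h := hcocycle 1 1 x
    simp only [one_mul, one_smul] at h
    nlinarith [hΔpos (1, x)]
  have hinv : ∀ (γ : G) (x : X), Δ (γ⁻¹, x) = (Δ (γ, γ⁻¹ • x))⁻¹ := by
    intro γ x
    have h := hcocycle γ⁻¹ γ (γ⁻¹ • x)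
    rw [inv_mul_cancel, smul_inv_smul, hΔ1] at h
    exact eq_inv_of_mul_eq_one_left h.symm
  have hsqrt : ∀ (γ : G) (x : X),
      Real.sqrt (Δ (γ⁻¹, x)) * Δ (γ, γ⁻¹ • x) = Real.sqrt (Δ (γ, γ⁻¹ • x)) := by
    intro γ x
    rw [hinv, Real.sqrt_inv, inv_mul_eq_div, Real.div_sqrt]
  -- the function to which we apply quasi-invariance
  set F : G × X → ℂ := fun p =>
    (starRingEnd ℂ) (φ p.1⁻¹) * (starRingEnd ℂ) (f (p.1 • p.2)) * g p.2
      * ((Real.sqrt (Δ (p.1⁻¹, p.1 • p.2)) : ℝ) : ℂ) with hF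
  have hcont : Continuous F := by
    apply Continuous.mul
    apply Continuous.mul
    apply Continuous.mul
    · exact continuous_star.comp (hφ.comp (continuous_inv.comp continuous_fst))
    · exact continuous_star.comp (hf.comp (continuous_smul.comp
        (continuous_fst.prodMk continuous_snd)))
    · exact hg.comp continuous_snd
    · exact Complex.continuous_ofReal.comp (Real.continuous_sqrt.comp
        (hΔcont.comp ((continuous_inv.comp continuous_fst).prodMk
          (continuous_smul.comp (continuous_fst.prodMk continuous_snd)))))
  have hFc : HasCompactSupport F := by
    apply HasCompactSupport.intro ((hφc.isCompact.inv).prod hgc.isCompact)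
    intro p hp
    simp only [Set.mem_prod, not_and_or, Set.mem_inv] at hp
    rcases hp with h1 | h2
    · have : φ p.1⁻¹ = 0 := image_eq_zero_of_notMem_tsupport h1
      simp [hF, this]
    · have : g p.2 = 0 := image_eq_zero_of_notMem_tsupport h2
      simp [hF, this]
  have key := hquasi F hcont hFc
  have hL : ∫ x, (starRingEnd ℂ)
          (∫ γ, φ γ * f (γ⁻¹ • x) * (Real.sqrt (Δ (γ, γ⁻¹ • x)) : ℂ) ∂α)
        * g x ∂lam = ∫ x, (∫ γ, F (γ⁻¹, x) ∂α) ∂lam := by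
    refine integral_congr_ae (Filter.Eventually.of_forall fun x => ?_)
    dsimp only
    rw [← integral_conj, ← integral_mul_const]
    refine integral_congr_ae (Filter.Eventually.of_forall fun γ => ?_)
    simp only [hF, inv_inv, map_mul, Complex.conj_ofReal]
    ring
  have hR : ∫ x, (starRingEnd ℂ) (f x)
          * (∫ γ, (starRingEnd ℂ) (φ γ⁻¹) * g (γ⁻¹ • x)
              * (Real.sqrt (Δ (γ, γ⁻¹ • x)) : ℂ) ∂α) ∂lam
      = ∫ x, (∫ γ, F (γ, γ⁻¹ • x) * ((Δ (γ, γ⁻¹ • x) : ℝ) : ℂ) ∂α) ∂lam := by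
    refine integral_congr_ae (Filter.Eventually.of_forall fun x => ?_)
    dsimp only
    rw [← integral_const_mul]
    refine integral_congr_ae (Filter.Eventually.of_forall fun γ => ?_)
    simp only [hF, smul_inv_smul]
    rw [mul_assoc _ _ ((Δ (γ, γ⁻¹ • x) : ℝ) : ℂ), ← Complex.ofReal_mul, hsqrt]
    ring
  rw [hL, hR, key]
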